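/- Relative error of the degree-1 approximation of the geodesic Wasserstein distance between two Diracs: for x, y ∈ S^m with geodesic distance d_g(x,y) = θ, the supremum of ⟨c, y⟩ − ⟨c, x⟩ over all c ∈ ℝ^{m+1} such that z ↦ ⟨c,z⟩ is 1-Lipschitz on S^m with respect to d_g equals ‖y − x‖ = 2 sin(θ/2). Hence the ratio between this degree-1 dual value and OT_{d_g}(δ_x, δ_y) = θ is ε = sin(θ/2)/(θ/2). -/

import Mathlib

open MeasureTheory
open scoped RealInnerProductSpace

/-- The unit sphere `S^m ⊆ ℝ^{m+1}`. -/
abbrev Sph (m : ℕ) := (Metric.sphere (0 : EuclideanSpace ℝ (Fin (m + 1))) 1 :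
  Set (EuclideanSpace ℝ (Fin (m + 1))))

/-- Geodesic distance on the unit sphere: `d_g(x, y) = arccos ⟨x, y⟩`. -/
noncomputable def geod {m : ℕ} (x y : Sph m) : ℝ :=
  Real.arccos ⟪(x : EuclideanSpace ℝ (Fin (m + 1))), (y : EuclideanSpace ℝ (Fin (m + 1)))⟫

/-- Optimal transport cost between two measures with cost `c`. -/
noncomputable def OTcost {Ω : Type*} [MeasurableSpace Ω]
    (c : Ω → Ω → ℝ) (μ ν : Measure Ω) : ℝ :=
  sInf {r : ℝ | ∃ π : Measure (Ω × Ω), IsProbabilityMeasure π ∧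
    π.map Prod.fst = μ ∧ π.map Prod.snd = ν ∧ r = ∫ p, c p.1 p.2 ∂π}

open Filter
open scoped Topology

lemma sph_norm {m : ℕ} (z : Sph m) : ‖(z : EuclideanSpace ℝ (Fin (m + 1)))‖ = 1 := by
  have := z.2
  rwa [mem_sphere_zero_iff_norm] at this

lemma inner_le {m : ℕ} (z w : Sph m) :
    ⟪(z : EuclideanSpace ℝ (Fin (m + 1))), (w : EuclideanSpace ℝ (Fin (m + 1)))⟫ ∈
      Set.Icc (-1 : ℝ) 1 := by
  have h := abs_real_inner_le_norm (z : EuclideanSpace ℝ (Fin (m + 1))) w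
  rw [sph_norm, sph_norm, mul_one] at h
  exact abs_le.mp h

lemma geod_nonneg {m : ℕ} (z w : Sph m) : 0 ≤ geod z w := Real.arccos_nonneg _

lemma geod_le_pi {m : ℕ} (z w : Sph m) : geod z w ≤ Real.pi := Real.arccos_le_pi _

lemma geod_symm {m : ℕ} (z w : Sph m) : geod z w = geod w z := by
  rw [geod, geod, real_inner_comm]

lemma chord_eq {m : ℕ} (z w : Sph m) :
    ‖(z : EuclideanSpace ℝ (Fin (m + 1))) - (w : EuclideanSpace ℝ (Fin (m + 1)))‖ =
      2 * Real.sin (geod z w / 2) := by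
  set θ := geod z w with hθ
  have hic := inner_le z w
  have hcos : Real.cos θ = ⟪(z : EuclideanSpace ℝ (Fin (m + 1))),
      (w : EuclideanSpace ℝ (Fin (m + 1)))⟫ := Real.cos_arccos hic.1 hic.2
  have hsin : 0 ≤ Real.sin (θ / 2) := by
    apply Real.sin_nonneg_of_nonneg_of_le_pi
    · linarith [geod_nonneg z w]
    · linarith [geod_le_pi z w, Real.pi_pos]
  have hsq : ‖(z : EuclideanSpace ℝ (Fin (m + 1))) - (w : EuclideanSpace ℝ (Fin (m + 1)))‖ ^ 2 =
      (2 * Real.sin (θ / 2)) ^ 2 := by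
    rw [norm_sub_sq_real, sph_norm, sph_norm, ← hcos]
    have h1 : Real.cos θ = 2 * Real.cos (θ / 2) ^ 2 - 1 := by
      have := Real.cos_two_mul (θ / 2)
      rw [show 2 * (θ / 2) = θ by ring] at this
      linarith
    have h2 := Real.sin_sq_add_cos_sq (θ / 2)
    nlinarith
  nlinarith [norm_nonneg ((z : EuclideanSpace ℝ (Fin (m + 1))) - (w : EuclideanSpace ℝ (Fin (m + 1))))]

lemma chord_le {m : ℕ} (z w : Sph m) :
    ‖(z : EuclideanSpace ℝ (Fin (m + 1))) - (w : EuclideanSpace ℝ (Fin (m + 1)))‖ ≤ geod z w := by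
  rw [chord_eq]
  have := Real.sin_le (by linarith [geod_nonneg z w] : (0:ℝ) ≤ geod z w / 2)
  linarith

lemma exists_orth (m : ℕ) (hm : 1 ≤ m) (c : EuclideanSpace ℝ (Fin (m + 1))) (hc : c ≠ 0) :
    ∃ v : EuclideanSpace ℝ (Fin (m + 1)), ‖v‖ = 1 ∧ ⟪c, v⟫ = 0 := by
  haveI : Fact (Module.finrank ℝ (EuclideanSpace ℝ (Fin (m + 1))) = m + 1) :=
    ⟨finrank_euclideanSpace_fin⟩
  have hfr : Module.finrank ℝ ((ℝ ∙ c)ᗮ : Submodule ℝ (EuclideanSpace ℝ (Fin (m + 1)))) = m :=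
    Submodule.finrank_orthogonal_span_singleton hc
  have hne : ((ℝ ∙ c)ᗮ : Submodule ℝ (EuclideanSpace ℝ (Fin (m + 1)))) ≠ ⊥ := by
    intro h
    rw [h, finrank_bot] at hfr
    omega
  obtain ⟨v₀, hv₀mem, hv₀⟩ := Submodule.exists_mem_ne_zero_of_ne_bot hne
  refine ⟨‖v₀‖⁻¹ • v₀, norm_smul_inv_norm hv₀, ?_⟩
  have : ⟪c, v₀⟫ = 0 := hv₀mem c (Submodule.mem_span_singleton_self c)
  rw [real_inner_smul_right, this, mul_zero]

lemma norm_le_one (m : ℕ) (hm : 1 ≤ m) (c : EuclideanSpace ℝ (Fin (m + 1)))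
    (hc : ∀ z w : Sph m, |⟪c, (z : EuclideanSpace ℝ (Fin (m + 1)))⟫ -
        ⟪c, (w : EuclideanSpace ℝ (Fin (m + 1)))⟫| ≤ geod z w) :
    ‖c‖ ≤ 1 := by
  by_cases h0 : c = 0
  · simp [h0]
  obtain ⟨v, hv1, hv0⟩ := exists_orth m hm c h0
  set u : EuclideanSpace ℝ (Fin (m + 1)) := ‖c‖⁻¹ • c with hu
  have hu1 : ‖u‖ = 1 := norm_smul_inv_norm h0
  have huv : ⟪u, v⟫ = 0 := by rw [real_inner_smul_left, hv0, mul_zero]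
  have hvu : ⟪v, u⟫ = 0 := by rw [real_inner_comm]; exact huv
  have huu : ⟪u, u⟫ = 1 := by rw [real_inner_self_eq_norm_sq, hu1]; norm_num
  have hvv : ⟪v, v⟫ = 1 := by rw [real_inner_self_eq_norm_sq, hv1]; norm_num
  have hcu : ⟪c, u⟫ = ‖c‖ := by
    rw [real_inner_smul_right, real_inner_self_eq_norm_sq, sq]
    field_simp
  have key : ∀ t ∈ Set.Ioc (0:ℝ) (Real.pi / 2), ‖c‖ * Real.sin t ≤ t := by
    intro t ht
    set z : EuclideanSpace ℝ (Fin (m + 1)) := Real.sin t • u + Real.cos t • v with hzdef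
    set w : EuclideanSpace ℝ (Fin (m + 1)) := (-Real.sin t) • u + Real.cos t • v with hwdef
    have hpyth := Real.sin_sq_add_cos_sq t
    have hzz : ⟪z, z⟫ = 1 := by
      simp only [hzdef, inner_add_left, inner_add_right, real_inner_smul_left,
        real_inner_smul_right, huu, hvv, huv, hvu]
      linear_combination hpyth
    have hww : ⟪w, w⟫ = 1 := by
      simp only [hwdef, inner_add_left, inner_add_right, real_inner_smul_left,
        real_inner_smul_right, huu, hvv, huv, hvu]
      linear_combination hpyth
    have hzw : ⟪z, w⟫ = Real.cos (2 * t) := by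
      simp only [hzdef, hwdef, inner_add_left, inner_add_right, real_inner_smul_left,
        real_inner_smul_right, huu, hvv, huv, hvu]
      rw [Real.cos_two_mul]
      linear_combination -hpyth
    have hnz : ‖z‖ = 1 := by
      have h : ‖z‖ ^ 2 = 1 := by rw [← real_inner_self_eq_norm_sq]; exact hzz
      nlinarith [norm_nonneg z]
    have hnw : ‖w‖ = 1 := by
      have h : ‖w‖ ^ 2 = 1 := by rw [← real_inner_self_eq_norm_sq]; exact hww
      nlinarith [norm_nonneg w]
    have hzS : z ∈ Metric.sphere (0 : EuclideanSpace ℝ (Fin (m + 1))) 1 := by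
      rwa [mem_sphere_zero_iff_norm]
    have hwS : w ∈ Metric.sphere (0 : EuclideanSpace ℝ (Fin (m + 1))) 1 := by
      rwa [mem_sphere_zero_iff_norm]
    have hgeod : geod (⟨z, hzS⟩ : Sph m) ⟨w, hwS⟩ = 2 * t := by
      rw [geod]
      simp only [hzw]
      exact Real.arccos_cos (by linarith [ht.1]) (by linarith [ht.2])
    have hdiff : ⟪c, z⟫ - ⟪c, w⟫ = 2 * Real.sin t * ‖c‖ := by
      simp only [hzdef, hwdef, inner_add_right, real_inner_smul_right, hcu, hv0]
      ring
    have := hc ⟨z, hzS⟩ ⟨w, hwS⟩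
    rw [hgeod] at this
    simp only [hdiff] at this
    have habs : 2 * Real.sin t * ‖c‖ ≤ 2 * t := le_trans (le_abs_self _) this
    linarith
  have hslope : Tendsto (fun t => Real.sin t / t) (𝓝[≠] (0:ℝ)) (𝓝 1) := by
    have h := Real.hasDerivAt_sin 0
    rw [Real.cos_zero, hasDerivAt_iff_tendsto_slope] at h
    exact h.congr (fun t => by simp [slope_def_field])
  have h2 : Tendsto (fun t => ‖c‖ * (Real.sin t / t)) (𝓝[>] (0:ℝ)) (𝓝 (‖c‖ * 1)) := by
    exact ((hslope.mono_left (nhdsWithin_mono _ (fun x hx => ne_of_gt hx))).const_mul ‖c‖)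
  have hev : ∀ᶠ t in 𝓝[>] (0:ℝ), ‖c‖ * (Real.sin t / t) ≤ 1 := by
    filter_upwards [Ioc_mem_nhdsGT_of_mem
      (show (0:ℝ) ∈ Set.Ico (0:ℝ) (Real.pi / 2) from ⟨le_refl _, Real.pi_div_two_pos⟩)] with t ht
    rw [← mul_div_assoc, div_le_one ht.1]
    exact key t ht
  have := le_of_tendsto h2 hev
  linarith

lemma ot_dirac {m : ℕ} (x y : Sph m) :
    OTcost geod (Measure.dirac x) (Measure.dirac y) = geod x y := by
  have hset : {r : ℝ | ∃ π : Measure (Sph m × Sph m), IsProbabilityMeasure π ∧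
      π.map Prod.fst = Measure.dirac x ∧ π.map Prod.snd = Measure.dirac y ∧
      r = ∫ p, geod p.1 p.2 ∂π} = {geod x y} := by
    ext r
    simp only [Set.mem_setOf_eq, Set.mem_singleton_iff]
    constructor
    · rintro ⟨π, hπ, hfst, hsnd, rfl⟩
      have h1 : ∀ᵐ p ∂π, p.1 = x := by
        rw [ae_iff]
        have : {p : Sph m × Sph m | ¬ p.1 = x} = Prod.fst ⁻¹' {x}ᶜ := by
          ext p; simp
        rw [this, ← Measure.map_apply measurable_fst (measurableSet_singleton x).compl, hfst]
        simp
      have h2 : ∀ᵐ p ∂π, p.2 = y := by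
        rw [ae_iff]
        have : {p : Sph m × Sph m | ¬ p.2 = y} = Prod.snd ⁻¹' {y}ᶜ := by
          ext p; simp
        rw [this, ← Measure.map_apply measurable_snd (measurableSet_singleton y).compl, hsnd]
        simp
      have hae : (fun p : Sph m × Sph m => geod p.1 p.2) =ᵐ[π] fun _ => geod x y := by
        filter_upwards [h1, h2] with p e1 e2
        rw [e1, e2]
      rw [integral_congr_ae hae, integral_const, probReal_univ]
      simp
    · rintro rfl
      refine ⟨Measure.dirac (x, y), inferInstance, ?_, ?_, ?_⟩
      · rw [Measure.map_dirac' measurable_fst]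
      · rw [Measure.map_dirac' measurable_snd]
      · rw [integral_dirac]
  rw [OTcost, hset, csInf_singleton]

lemma sup_eq {m : ℕ} (hm : 1 ≤ m) (x y : Sph m) :
    sSup {r : ℝ | ∃ c : EuclideanSpace ℝ (Fin (m + 1)),
        (∀ z w : Sph m, |⟪c, (z : EuclideanSpace ℝ (Fin (m + 1)))⟫ -
            ⟪c, (w : EuclideanSpace ℝ (Fin (m + 1)))⟫| ≤ geod z w) ∧
        r = ⟪c, (y : EuclideanSpace ℝ (Fin (m + 1)))⟫ -
          ⟪c, (x : EuclideanSpace ℝ (Fin (m + 1)))⟫} =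
      ‖(y : EuclideanSpace ℝ (Fin (m + 1))) - (x : EuclideanSpace ℝ (Fin (m + 1)))‖ := by
  apply IsGreatest.csSup_eq
  constructor
  · by_cases hxy : (y : EuclideanSpace ℝ (Fin (m + 1))) = (x : EuclideanSpace ℝ (Fin (m + 1)))
    · exact ⟨0, fun z w => by simpa using geod_nonneg z w, by simp [hxy]⟩
    · have hd : (y : EuclideanSpace ℝ (Fin (m + 1))) - (x : EuclideanSpace ℝ (Fin (m + 1))) ≠ 0 :=
        sub_ne_zero.mpr hxy
      set d := (y : EuclideanSpace ℝ (Fin (m + 1))) - (x : EuclideanSpace ℝ (Fin (m + 1))) with hdd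
      have h0 : ‖d‖ ≠ 0 := norm_ne_zero_iff.mpr hd
      refine ⟨‖d‖⁻¹ • d, fun z w => ?_, ?_⟩
      · rw [← inner_sub_right]
        calc |⟪‖d‖⁻¹ • d, (z : EuclideanSpace ℝ (Fin (m + 1))) - (w : EuclideanSpace ℝ (Fin (m + 1)))⟫|
            ≤ ‖‖d‖⁻¹ • d‖ * ‖(z : EuclideanSpace ℝ (Fin (m + 1))) - (w : EuclideanSpace ℝ (Fin (m + 1)))‖ :=
              abs_real_inner_le_norm _ _
          _ = ‖(z : EuclideanSpace ℝ (Fin (m + 1))) - (w : EuclideanSpace ℝ (Fin (m + 1)))‖ := by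
              rw [norm_smul, norm_inv, norm_norm, inv_mul_cancel₀ h0, one_mul]
          _ ≤ geod z w := chord_le z w
      · rw [← inner_sub_right, ← hdd, real_inner_smul_left, real_inner_self_eq_norm_sq, sq]
        field_simp
  · rintro r ⟨c, hcL, rfl⟩
    have hc1 := norm_le_one m hm c hcL
    calc ⟪c, (y : EuclideanSpace ℝ (Fin (m + 1)))⟫ - ⟪c, (x : EuclideanSpace ℝ (Fin (m + 1)))⟫
        = ⟪c, (y : EuclideanSpace ℝ (Fin (m + 1))) - (x : EuclideanSpace ℝ (Fin (m + 1)))⟫ :=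
          (inner_sub_right _ _ _).symm
      _ ≤ ‖c‖ * ‖(y : EuclideanSpace ℝ (Fin (m + 1))) - (x : EuclideanSpace ℝ (Fin (m + 1)))‖ :=
          real_inner_le_norm _ _
      _ ≤ 1 * ‖(y : EuclideanSpace ℝ (Fin (m + 1))) - (x : EuclideanSpace ℝ (Fin (m + 1)))‖ :=
          mul_le_mul_of_nonneg_right hc1 (norm_nonneg _)
      _ = ‖(y : EuclideanSpace ℝ (Fin (m + 1))) - (x : EuclideanSpace ℝ (Fin (m + 1)))‖ := one_mul _

/-- for `x, y ∈ S^m` with `d_g(x, y) = θ`, the supremum of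
`⟨c, y⟩ − ⟨c, x⟩` over all `c` whose linear functional is `1`-Lipschitz on `S^m` for the
geodesic distance equals `‖y − x‖ = 2 sin(θ/2)`; since `OT_{d_g}(δ_x, δ_y) = θ`, the
ratio between this degree-1 dual value and `OT_{d_g}(δ_x, δ_y)` is `sin(θ/2)/(θ/2)`. -/
theorem stmt_15 (m : ℕ) (hm : 1 ≤ m) (x y : Sph m) :
    sSup {r : ℝ | ∃ c : EuclideanSpace ℝ (Fin (m + 1)),
        (∀ z w : Sph m, |⟪c, (z : EuclideanSpace ℝ (Fin (m + 1)))⟫ -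
            ⟪c, (w : EuclideanSpace ℝ (Fin (m + 1)))⟫| ≤ geod z w) ∧
        r = ⟪c, (y : EuclideanSpace ℝ (Fin (m + 1)))⟫ -
          ⟪c, (x : EuclideanSpace ℝ (Fin (m + 1)))⟫} =
      ‖(y : EuclideanSpace ℝ (Fin (m + 1))) - (x : EuclideanSpace ℝ (Fin (m + 1)))‖ ∧
    ‖(y : EuclideanSpace ℝ (Fin (m + 1))) - (x : EuclideanSpace ℝ (Fin (m + 1)))‖ =
      2 * Real.sin (geod x y / 2) ∧
    OTcost geod (Measure.dirac x) (Measure.dirac y) = geod x y ∧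
    (geod x y ≠ 0 →
      sSup {r : ℝ | ∃ c : EuclideanSpace ℝ (Fin (m + 1)),
          (∀ z w : Sph m, |⟪c, (z : EuclideanSpace ℝ (Fin (m + 1)))⟫ -
              ⟪c, (w : EuclideanSpace ℝ (Fin (m + 1)))⟫| ≤ geod z w) ∧
          r = ⟪c, (y : EuclideanSpace ℝ (Fin (m + 1)))⟫ -
            ⟪c, (x : EuclideanSpace ℝ (Fin (m + 1)))⟫} /
        OTcost geod (Measure.dirac x) (Measure.dirac y) =
      Real.sin (geod x y / 2) / (geod x y / 2)) := by
  have hchord : ‖(y : EuclideanSpace ℝ (Fin (m + 1))) - (x : EuclideanSpace ℝ (Fin (m + 1)))‖ =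
      2 * Real.sin (geod x y / 2) := by
    rw [chord_eq y x, geod_symm y x]
  refine ⟨sup_eq hm x y, hchord, ot_dirac x y, fun hne => ?_⟩
  rw [sup_eq hm x y, ot_dirac x y, hchord]
  have hθ : 0 < geod x y := lt_of_le_of_ne (geod_nonneg x y) (Ne.symm hne)
  field_simp
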